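/- There exists a constant d₁ > 0 (one may take d₁ = 1/320) such that the following holds for every n and every real n×n matrix A with ‖A eᵢ‖ = 1 for i = 1,…,n: for every σ₁ ⊆ {1,…,n} with |σ₁| ≤ d₁ n ‖A‖⁻² there exists σ₂ ⊆ {1,…,n} \ σ₁ with |σ₂| ≥ d₁ n ‖A‖⁻² such that for every i ∈ σ₂, the orthogonal projection of A eᵢ onto span{A eⱼ : j ∈ (σ₁ ∪ σ₂) \ {i}} has norm strictly less than 1/√2. -/

import Mathlib

open scoped RealInnerProductSpace BigOperators

/-- The Euclidean operator norm of a real matrix: `sup {‖Ax‖ : ‖x‖ = 1}`. -/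
noncomputable def opNorm {m n : ℕ} (A : Matrix (Fin m) (Fin n) ℝ) : ℝ :=
  sSup {c : ℝ | ∃ x : EuclideanSpace ℝ (Fin n), ‖x‖ = 1 ∧ c = ‖Matrix.toEuclideanLin A x‖}

/-- The matrix of the orthogonal projection of `ℝⁿ` onto the subspace `U`. -/
noncomputable def projMatrix {n : ℕ} (U : Submodule ℝ (EuclideanSpace ℝ (Fin n))) :
    Matrix (Fin n) (Fin n) ℝ :=
  Matrix.toEuclideanLin.symm (U.subtype ∘ₗ (Submodule.orthogonalProjectionOnto U).toLinearMap)

/-- The minimal stretch of a matrix `A` on a subspace `U`: `inf {‖Ax‖ : x ∈ U, ‖x‖ = 1}`. -/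
noncomputable def minStretch {m n : ℕ} (A : Matrix (Fin m) (Fin n) ℝ)
    (U : Submodule ℝ (EuclideanSpace ℝ (Fin n))) : ℝ :=
  sInf {c : ℝ | ∃ x ∈ U, ‖x‖ = 1 ∧ c = ‖Matrix.toEuclideanLin A x‖}

section BTHelpers

open Submodule Finset Matrix

variable {n : ℕ}

abbrev Euc (n : ℕ) := EuclideanSpace ℝ (Fin n)

lemma proj_pyth (V : Submodule ℝ (Euc n)) (x : Euc n) :
    ‖((Submodule.orthogonalProjectionOnto V x : V) : Euc n)‖^2 + ‖x - Submodule.orthogonalProjectionOnto V x‖^2 = ‖x‖^2 := by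
  have horth : (inner ℝ ((Submodule.orthogonalProjectionOnto V x : V) : Euc n) (x - Submodule.orthogonalProjectionOnto V x) : ℝ) = 0 :=
    (Submodule.sub_starProjection_mem_orthogonal (K := V) x) _ (Submodule.orthogonalProjectionOnto V x).2
  have h := norm_add_sq_real ((Submodule.orthogonalProjectionOnto V x : V) : Euc n) (x - Submodule.orthogonalProjectionOnto V x)
  rw [add_sub_cancel, horth] at h
  linarith

lemma proj_norm_le (V : Submodule ℝ (Euc n)) (x : Euc n) :
    ‖((Submodule.orthogonalProjectionOnto V x : V) : Euc n)‖ ≤ ‖x‖ := by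
  have h := proj_pyth V x
  nlinarith [norm_nonneg (x - (Submodule.orthogonalProjectionOnto V x : Euc n)), norm_nonneg x,
    norm_nonneg ((Submodule.orthogonalProjectionOnto V x : V) : Euc n)]

lemma sub_proj_norm_le (V : Submodule ℝ (Euc n)) (x : Euc n) :
    ‖x - Submodule.orthogonalProjectionOnto V x‖ ≤ ‖x‖ := by
  have h := proj_pyth V x
  nlinarith [norm_nonneg (x - (Submodule.orthogonalProjectionOnto V x : Euc n)), norm_nonneg x,
    norm_nonneg ((Submodule.orthogonalProjectionOnto V x : V) : Euc n)]

lemma proj_mono {U V : Submodule ℝ (Euc n)} (h : U ≤ V) (x : Euc n) :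
    ‖((Submodule.orthogonalProjectionOnto U x : U) : Euc n)‖ ≤ ‖((Submodule.orthogonalProjectionOnto V x : V) : Euc n)‖ := by
  have key : (Submodule.orthogonalProjectionOnto U x : Euc n)
      = Submodule.orthogonalProjectionOnto U ((Submodule.orthogonalProjectionOnto V x : V) : Euc n) := by
    have hxz : Submodule.orthogonalProjectionOnto U (x - Submodule.orthogonalProjectionOnto V x) = 0 :=
      Submodule.orthogonalProjectionOnto_apply_of_mem_orthogonal
        (Submodule.orthogonal_le h (Submodule.sub_starProjection_mem_orthogonal x))
    have h2 : Submodule.orthogonalProjectionOnto U x = Submodule.orthogonalProjectionOnto U ((Submodule.orthogonalProjectionOnto V x : V) : Euc n) := by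
      rw [← sub_eq_zero, ← map_sub]; exact hxz
    exact congrArg _ h2
  rw [key]
  exact proj_norm_le U _
lemma proj_norm_sq_eq_sum (V : Submodule ℝ (Euc n)) (y : Euc n) :
    ‖((Submodule.orthogonalProjectionOnto V y : V) : Euc n)‖^2
      = ∑ s, (inner ℝ ((stdOrthonormalBasis ℝ V s : V) : Euc n) y : ℝ)^2 := by
  set b := stdOrthonormalBasis ℝ V with hb
  have h := b.sum_inner_mul_inner (Submodule.orthogonalProjectionOnto V y) (Submodule.orthogonalProjectionOnto V y)
  have h2 : ∀ s, (inner ℝ (b s) (Submodule.orthogonalProjectionOnto V y) : ℝ)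
      = (inner ℝ ((b s : V) : Euc n) y : ℝ) := fun s =>
    Submodule.inner_orthogonalProjectionOnto_eq_of_mem_left (K := V) (b s) y
  have hzz : (inner ℝ (Submodule.orthogonalProjectionOnto V y) (Submodule.orthogonalProjectionOnto V y) : ℝ)
      = ‖((Submodule.orthogonalProjectionOnto V y : V) : Euc n)‖^2 := by
    rw [real_inner_self_eq_norm_sq, Submodule.norm_coe]
  rw [hzz] at h
  rw [← h]
  congr 1
  funext s
  have e1 : (inner ℝ ((Submodule.orthogonalProjectionOnto V) y) (b s) : ℝ) = inner ℝ ((b s : V) : Euc n) y :=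
    (real_inner_comm _ _).trans (h2 s)
  simp only [e1, h2 s]
  ring

lemma adjoint_bound (L : Euc n →ₗ[ℝ] Euc n) (K : ℝ) (hL : ∀ x, ‖L x‖ ≤ K * ‖x‖) (y : Euc n) :
    ‖LinearMap.adjoint L y‖ ≤ K * ‖y‖ := by
  rcases eq_or_ne y 0 with rfl | hy
  · simp
  have hK : 0 ≤ K := by
    have h1 := hL y
    have h2 := norm_nonneg (L y)
    have h3 : 0 < ‖y‖ := norm_pos_iff.2 hy
    nlinarith
  rcases eq_or_ne (LinearMap.adjoint L y) 0 with h0 | h0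
  · rw [h0]; simp; positivity
  have hpos : 0 < ‖LinearMap.adjoint L y‖ := norm_pos_iff.2 h0
  have key : ‖LinearMap.adjoint L y‖^2 ≤ K * ‖y‖ * ‖LinearMap.adjoint L y‖ := by
    have h1 : ‖LinearMap.adjoint L y‖^2 = (inner ℝ y (L (LinearMap.adjoint L y)) : ℝ) := by
      rw [← LinearMap.adjoint_inner_left, real_inner_self_eq_norm_sq]
    rw [h1]
    calc (inner ℝ y (L (LinearMap.adjoint L y)) : ℝ) ≤ ‖y‖ * ‖L (LinearMap.adjoint L y)‖ :=
          real_inner_le_norm _ _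
      _ ≤ ‖y‖ * (K * ‖LinearMap.adjoint L y‖) := by
          have := hL (LinearMap.adjoint L y)
          nlinarith [norm_nonneg y]
      _ = K * ‖y‖ * ‖LinearMap.adjoint L y‖ := by ring
  nlinarith

lemma norm_sq_eq_sum_inner_single (y : Euc n) :
    ‖y‖^2 = ∑ i : Fin n, (inner ℝ y (EuclideanSpace.single i (1:ℝ)) : ℝ)^2 := by
  have h : ∀ i, (inner ℝ y (EuclideanSpace.single i (1:ℝ)) : ℝ) = y i := by
    intro i
    rw [EuclideanSpace.inner_single_right]
    simp
  simp only [h]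
  rw [EuclideanSpace.norm_eq, Real.sq_sqrt (by positivity)]
  congr 1; funext i; rw [Real.norm_eq_abs, sq_abs]

lemma sum_norm_sq_proj (L : Euc n →ₗ[ℝ] Euc n) (K : ℝ) (hK : 0 ≤ K)
    (hL : ∀ x, ‖L x‖ ≤ K * ‖x‖) (V : Submodule ℝ (Euc n)) :
    ∑ i : Fin n, ‖((Submodule.orthogonalProjectionOnto V (L (EuclideanSpace.single i 1)) : V) : Euc n)‖^2
      ≤ (Module.finrank ℝ V : ℝ) * K^2 := by
  set b := stdOrthonormalBasis ℝ V with hb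
  have step1 : ∑ i : Fin n, ‖((Submodule.orthogonalProjectionOnto V (L (EuclideanSpace.single i 1)) : V) : Euc n)‖^2
      = ∑ s, ∑ i : Fin n, (inner ℝ ((b s : V) : Euc n) (L (EuclideanSpace.single i 1)) : ℝ)^2 := by
    rw [Finset.sum_comm]
    congr 1; funext i
    exact proj_norm_sq_eq_sum V _
  have step2 : ∀ s, ∑ i : Fin n, (inner ℝ ((b s : V) : Euc n) (L (EuclideanSpace.single i 1)) : ℝ)^2
      = ‖LinearMap.adjoint L ((b s : V) : Euc n)‖^2 := by
    intro s
    rw [norm_sq_eq_sum_inner_single]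
    congr 1; funext i
    rw [LinearMap.adjoint_inner_left]
  have step3 : ∀ s : Fin (Module.finrank ℝ V),
      ‖LinearMap.adjoint L ((b s : V) : Euc n)‖^2 ≤ K^2 := by
    intro s
    have h1 := adjoint_bound L K hL ((b s : V) : Euc n)
    have h2 : ‖((b s : V) : Euc n)‖ = 1 := by
      rw [Submodule.norm_coe]; exact b.orthonormal.1 s
    rw [h2, mul_one] at h1
    nlinarith [norm_nonneg (LinearMap.adjoint L ((b s : V) : Euc n))]
  calc ∑ i : Fin n, ‖((Submodule.orthogonalProjectionOnto V (L (EuclideanSpace.single i 1)) : V) : Euc n)‖^2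
      = ∑ s, ‖LinearMap.adjoint L ((b s : V) : Euc n)‖^2 := by
        rw [step1]; congr 1; funext s; exact step2 s
    _ ≤ ∑ _s : Fin (Module.finrank ℝ V), K^2 := Finset.sum_le_sum (fun s _ => step3 s)
    _ = (Module.finrank ℝ V : ℝ) * K^2 := by
        rw [Finset.sum_const]; simp [Finset.card_univ]
lemma opNorm_bddAbove {m : ℕ} (A : Matrix (Fin m) (Fin n) ℝ) :
    BddAbove {c : ℝ | ∃ x : EuclideanSpace ℝ (Fin n), ‖x‖ = 1 ∧ c = ‖Matrix.toEuclideanLin A x‖} := by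
  refine ⟨‖(LinearMap.toContinuousLinearMap (Matrix.toEuclideanLin A))‖, ?_⟩
  rintro c ⟨x, hx, rfl⟩
  have := (LinearMap.toContinuousLinearMap (Matrix.toEuclideanLin A)).le_opNorm x
  simpa [hx] using this

lemma le_opNorm_mul {m : ℕ} (A : Matrix (Fin m) (Fin n) ℝ) (x : EuclideanSpace ℝ (Fin n)) :
    ‖Matrix.toEuclideanLin A x‖ ≤ opNorm A * ‖x‖ := by
  rcases eq_or_ne x 0 with rfl | hx
  · simp
  have hxn : 0 < ‖x‖ := norm_pos_iff.2 hx
  set u : EuclideanSpace ℝ (Fin n) := ‖x‖⁻¹ • x with hu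
  have hun : ‖u‖ = 1 := by
    rw [hu, norm_smul, norm_inv, norm_norm, inv_mul_cancel₀ hxn.ne']
  have hmem : ‖Matrix.toEuclideanLin A u‖ ∈
      {c : ℝ | ∃ x : EuclideanSpace ℝ (Fin n), ‖x‖ = 1 ∧ c = ‖Matrix.toEuclideanLin A x‖} :=
    ⟨u, hun, rfl⟩
  have h1 : ‖Matrix.toEuclideanLin A u‖ ≤ opNorm A := le_csSup (opNorm_bddAbove A) hmem
  have h2 : ‖Matrix.toEuclideanLin A u‖ = ‖x‖⁻¹ * ‖Matrix.toEuclideanLin A x‖ := by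
    rw [hu, _root_.map_smul, norm_smul, norm_inv, norm_norm]
  rw [h2] at h1
  calc ‖Matrix.toEuclideanLin A x‖ = ‖x‖ * (‖x‖⁻¹ * ‖Matrix.toEuclideanLin A x‖) := by
        field_simp
    _ ≤ ‖x‖ * opNorm A := by
        apply mul_le_mul_of_nonneg_left h1 hxn.le
    _ = opNorm A * ‖x‖ := mul_comm _ _

lemma one_le_opNorm {m : ℕ} (A : Matrix (Fin m) (Fin n) ℝ) (i : Fin n)
    (h : ‖Matrix.toEuclideanLin A (EuclideanSpace.single i (1:ℝ))‖ = 1) : 1 ≤ opNorm A := by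
  have hmem : (1:ℝ) ∈
      {c : ℝ | ∃ x : EuclideanSpace ℝ (Fin n), ‖x‖ = 1 ∧ c = ‖Matrix.toEuclideanLin A x‖} :=
    ⟨EuclideanSpace.single i 1, by simp [EuclideanSpace.norm_single], h.symm⟩
  exact le_csSup (opNorm_bddAbove A) hmem
noncomputable def gramdet (w : Fin n → Euc n) (T : Finset (Fin n)) : ℝ :=
  (Matrix.of fun j k : {x // x ∈ T} => (inner ℝ (w j.1) (w k.1) : ℝ)).det

lemma gramdet_empty (w : Fin n → Euc n) : gramdet w ∅ = 1 := by
  haveI : IsEmpty {x : Fin n // x ∈ (∅ : Finset (Fin n))} :=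
    ⟨fun j => absurd j.2 (Finset.notMem_empty _)⟩
  exact Matrix.det_isEmpty

lemma gramdet_nonneg (w : Fin n → Euc n) (T : Finset (Fin n)) : 0 ≤ gramdet w T := by
  set B : Matrix (Fin n) {x // x ∈ T} ℝ := Matrix.of fun r j => w j.1 r with hB
  have hBG : (Matrix.of fun j k : {x // x ∈ T} => (inner ℝ (w j.1) (w k.1) : ℝ)) = Bᴴ * B := by
    ext j k
    simp only [Matrix.of_apply, Matrix.mul_apply, Matrix.conjTranspose_apply, hB, star]
    rw [PiLp.inner_apply]
    exact Finset.sum_congr rfl (fun i _ => by simp [mul_comm])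
  have hpsd : (Bᴴ * B).PosSemidef := Matrix.posSemidef_conjTranspose_mul_self B
  unfold gramdet
  rw [hBG]
  rw [hpsd.isHermitian.det_eq_prod_eigenvalues]
  have h := fun i => hpsd.eigenvalues_nonneg i
  have : (0:ℝ) ≤ ∏ i, hpsd.isHermitian.eigenvalues i := Finset.prod_nonneg (fun i _ => h i)
  exact_mod_cast this

def eraseEquiv (T : Finset (Fin n)) (i : Fin n) (hi : i ∈ T) :
    (Unit ⊕ {x // x ∈ T.erase i}) ≃ {x // x ∈ T} where
  toFun := Sum.elim (fun _ => ⟨i, hi⟩) (fun k => ⟨k.1, Finset.mem_of_mem_erase k.2⟩)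
  invFun j := if h : j.1 = i then Sum.inl () else Sum.inr ⟨j.1, Finset.mem_erase.2 ⟨h, j.2⟩⟩
  left_inv := by
    rintro (⟨⟩ | k)
    · simp
    · have hk : k.1 ≠ i := (Finset.mem_erase.1 k.2).1
      simp only [Sum.elim_inr, hk, dif_neg, not_false_iff]; exact dif_neg hk
  right_inv := by
    intro j
    by_cases h : j.1 = i
    · simp only [h, dif_pos]
      exact Subtype.ext h.symm
    · simp only [h, dif_neg, not_false_iff, Sum.elim_inr]

lemma gramdet_erase (w : Fin n → Euc n) {T : Finset (Fin n)} {i : Fin n} (hi : i ∈ T) :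
    gramdet w T =
      ‖w i - (Submodule.orthogonalProjectionOnto (span ℝ (w '' ↑(T.erase i))) (w i) : Euc n)‖^2
        * gramdet w (T.erase i) := by
  classical
  set V := span ℝ (w '' (↑(T.erase i) : Set (Fin n))) with hV
  set p : Euc n := (Submodule.orthogonalProjectionOnto V (w i) : Euc n) with hp
  set d : Euc n := w i - p with hd
  set i0 : {x // x ∈ T} := ⟨i, hi⟩ with hi0
  -- orthogonality
  have hdperp : d ∈ Vᗮ := Submodule.sub_starProjection_mem_orthogonal (K := V) (w i)
  have hwV : ∀ k : {x // x ∈ T.erase i}, w k.1 ∈ V := fun k =>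
    subset_span (Set.mem_image_of_mem w (by exact_mod_cast k.2))
  have horth : ∀ k : {x // x ∈ T.erase i}, (inner ℝ (w k.1) d : ℝ) = 0 := fun k =>
    hdperp (w k.1) (hwV k)
  have horth' : ∀ k : {x // x ∈ T.erase i}, (inner ℝ d (w k.1) : ℝ) = 0 := fun k => by
    rw [real_inner_comm]; exact horth k
  -- coefficients
  have hpV : p ∈ V := SetLike.coe_mem _
  have hVr : V = span ℝ (Set.range fun j : {x // x ∈ (T.erase i)} => w j.1) := by
    rw [hV, Set.image_eq_range]; rfl
  obtain ⟨c, hc⟩ := (mem_span_range_iff_exists_fun ℝ).1 (hVr ▸ hpV)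
  set e := eraseEquiv T i hi with he
  set cc : {x // x ∈ T} → ℝ := fun j =>
    if h : j = i0 then 1
    else - c ⟨j.1, Finset.mem_erase.2 ⟨fun hji => h (Subtype.ext hji), j.2⟩⟩ with hcc
  have hcc_i0 : cc i0 = 1 := by rw [hcc]; exact dif_pos rfl
  have hcc_inr : ∀ k : {x // x ∈ T.erase i}, cc (e (Sum.inr k)) = - c k := by
    intro k
    have hk : k.1 ≠ i := (Finset.mem_erase.1 k.2).1
    have hne : e (Sum.inr k) ≠ i0 := by
      intro hcon
      exact hk (congrArg Subtype.val hcon)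
    rw [hcc]
    beta_reduce
    rw [dif_neg hne]
    rfl
  have hsum : ∑ j : {x // x ∈ T}, cc j • w j.1 = d := by
    rw [← Equiv.sum_comp e (fun j => cc j • w j.1)]
    rw [Fintype.sum_sum_type]
    have h1 : ∑ x : Unit, cc (e (Sum.inl x)) • w (e (Sum.inl x)).1 = w i := by
      have : e (Sum.inl ()) = i0 := rfl
      simp [this, hcc_i0]; rfl
    rw [h1]
    have h2 : ∀ k : {x // x ∈ T.erase i},
        cc (e (Sum.inr k)) • w (e (Sum.inr k)).1 = - (c k • w k.1) := by
      intro k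
      rw [hcc_inr k]
      have : (e (Sum.inr k)).1 = k.1 := rfl
      rw [this, neg_smul]
    rw [Finset.sum_congr rfl (fun k _ => h2 k), Finset.sum_neg_distrib, hc]
    rw [hd]
    abel
  -- the Gram matrix
  set G : Matrix {x // x ∈ T} {x // x ∈ T} ℝ :=
    Matrix.of (fun j k : {x // x ∈ T} => (inner ℝ (w j.1) (w k.1) : ℝ)) with hG
  have hrow_d : ∀ y : Euc n, (inner ℝ d y : ℝ) = ∑ j : {x // x ∈ T}, cc j * inner ℝ (w j.1) y := by
    intro y
    rw [← hsum, sum_inner]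
    apply Finset.sum_congr rfl
    intro j _
    rw [real_inner_smul_left]
  have hinner_d : ∀ y : Euc n, (inner ℝ y d : ℝ) = ∑ j : {x // x ∈ T}, cc j * inner ℝ y (w j.1) := by
    intro y
    rw [← hsum, inner_sum]
    apply Finset.sum_congr rfl
    intro j _
    rw [real_inner_smul_right]
  have hrow : (fun k : {x // x ∈ T} => (inner ℝ d (w k.1) : ℝ)) = ∑ j, cc j • G j := by
    funext k
    rw [hrow_d (w k.1), Finset.sum_apply]
    apply Finset.sum_congr rfl
    intro j _
    simp [hG]
  set G1 : Matrix {x // x ∈ T} {x // x ∈ T} ℝ :=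
    G.updateRow i0 (fun k => (inner ℝ d (w k.1) : ℝ)) with hG1
  have hdet1 : G1.det = G.det := by
    rw [hG1, hrow, Matrix.det_updateRow_sum G i0 cc, hcc_i0, one_smul]
  set colfun : {x // x ∈ T} → ℝ := fun k =>
    if k = i0 then (inner ℝ d d : ℝ) else (inner ℝ (w k.1) d : ℝ) with hcolfun
  have hcol : colfun = fun k => ∑ j, cc j • G1 k j := by
    funext k
    by_cases hk : k = i0
    · rw [hcolfun]
      beta_reduce
      rw [if_pos hk, hinner_d d]
      apply Finset.sum_congr rfl
      intro j _
      rw [smul_eq_mul, hk, hG1, Matrix.updateRow_self]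
    · rw [hcolfun]
      beta_reduce
      rw [if_neg hk, hinner_d (w k.1)]
      apply Finset.sum_congr rfl
      intro j _
      rw [smul_eq_mul, hG1, Matrix.updateRow_ne hk]
      rfl
  set G2 : Matrix {x // x ∈ T} {x // x ∈ T} ℝ := G1.updateCol i0 colfun with hG2
  have hdet2 : G2.det = G1.det := by
    rw [hG2, hcol]
    have := Matrix.det_updateCol_sum G1 i0 cc
    rw [hcc_i0, one_smul] at this
    convert this using 3
  set N : Matrix {x // x ∈ T.erase i} {x // x ∈ T.erase i} ℝ :=
    Matrix.of (fun j k : {x // x ∈ T.erase i} => (inner ℝ (w j.1) (w k.1) : ℝ)) with hN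
  set D : Matrix Unit Unit ℝ := fun _ _ => ‖d‖^2 with hD
  have hblock : G2 = (Matrix.fromBlocks D 0 0 N).submatrix e.symm e.symm := by
    ext j k
    have hsymm : ∀ j' : {x // x ∈ T}, (hj' : j'.1 ≠ i) →
        e.symm j' = Sum.inr ⟨j'.1, Finset.mem_erase.2 ⟨hj', j'.2⟩⟩ := by
      intro j' hj'
      show (if h : j'.1 = i then Sum.inl () else Sum.inr _) = _
      rw [dif_neg hj']
    have hsymm0 : e.symm i0 = Sum.inl () := by
      show (if h : (i0 : {x // x ∈ T}).1 = i then Sum.inl () else Sum.inr _) = _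
      rw [dif_pos rfl]
    by_cases hj : j = i0 <;> by_cases hk : k = i0
    · subst hj; subst hk
      rw [Matrix.submatrix_apply, hsymm0]
      show G2 i0 i0 = ‖d‖^2
      rw [hG2, Matrix.updateCol_self, hcolfun]
      beta_reduce
      rw [if_pos rfl, real_inner_self_eq_norm_sq]
    · subst hj
      have hk1 : k.1 ≠ i := fun hcon => hk (Subtype.ext hcon)
      rw [Matrix.submatrix_apply, hsymm0, hsymm k hk1]
      show G2 i0 k = (0 : Matrix Unit {x // x ∈ T.erase i} ℝ) () ⟨k.1, Finset.mem_erase.2 ⟨hk1, k.2⟩⟩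
      rw [hG2, Matrix.updateCol_ne hk, hG1, Matrix.updateRow_self]
      simpa using horth' ⟨k.1, Finset.mem_erase.2 ⟨hk1, k.2⟩⟩
    · subst hk
      have hj1 : j.1 ≠ i := fun hcon => hj (Subtype.ext hcon)
      rw [Matrix.submatrix_apply, hsymm0, hsymm j hj1]
      show G2 j i0 = (0 : Matrix {x // x ∈ T.erase i} Unit ℝ) ⟨j.1, Finset.mem_erase.2 ⟨hj1, j.2⟩⟩ ()
      rw [hG2, Matrix.updateCol_self, hcolfun]
      beta_reduce
      rw [if_neg hj]
      simpa using horth ⟨j.1, Finset.mem_erase.2 ⟨hj1, j.2⟩⟩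
    · have hj1 : j.1 ≠ i := fun hcon => hj (Subtype.ext hcon)
      have hk1 : k.1 ≠ i := fun hcon => hk (Subtype.ext hcon)
      rw [Matrix.submatrix_apply, hsymm j hj1, hsymm k hk1]
      show G2 j k = N _ _
      rw [hG2, Matrix.updateCol_ne hk, hG1, Matrix.updateRow_ne hj]
      rfl
  have hdet3 : G2.det = ‖d‖^2 * N.det := by
    rw [hblock, Matrix.det_submatrix_equiv_self, Matrix.det_fromBlocks_zero₂₁]
    congr 1
    rw [Matrix.det_unique]
  have : gramdet w T = G.det := rfl
  rw [this, ← hdet1, ← hdet2, hdet3]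
  rfl

lemma exists_gramdet_pos (w : Fin n → Euc n) (S : Finset (Fin n)) (m : ℕ)
    (hm : m ≤ Module.finrank ℝ (span ℝ (w '' (↑S : Set (Fin n))))) :
    ∃ T : Finset (Fin n), T ⊆ S ∧ T.card = m ∧ 0 < gramdet w T := by
  classical
  induction m with
  | zero => exact ⟨∅, Finset.empty_subset S, Finset.card_empty, by rw [gramdet_empty]; norm_num⟩
  | succ m ih =>
    obtain ⟨T, hTS, hTcard, hTpos⟩ := ih (le_trans (Nat.le_succ m) hm)
    have hnotsub : ¬ (w '' (↑S : Set (Fin n)) ⊆ (span ℝ (w '' (↑T : Set (Fin n))) : Set (Euc n))) := by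
      intro hsub
      have h1 : span ℝ (w '' (↑S : Set (Fin n))) ≤ span ℝ (w '' (↑T : Set (Fin n))) :=
        span_le.2 hsub
      have h2 : Module.finrank ℝ (span ℝ (w '' (↑S : Set (Fin n))))
          ≤ Module.finrank ℝ (span ℝ (w '' (↑T : Set (Fin n)))) := Submodule.finrank_mono h1
      have h3 : Module.finrank ℝ (span ℝ (w '' (↑T : Set (Fin n)))) ≤ T.card := by
        rw [← Finset.coe_image]
        exact le_trans (finrank_span_finset_le_card (T.image w)) Finset.card_image_le
      omega
    obtain ⟨z, hzS, hz⟩ := Set.not_subset.1 hnotsub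
    obtain ⟨j, hjS, rfl⟩ := hzS
    have hjT : j ∉ T := fun hjT => hz (subset_span (Set.mem_image_of_mem w hjT))
    refine ⟨insert j T, Finset.insert_subset (by exact_mod_cast hjS) hTS, ?_, ?_⟩
    · rw [Finset.card_insert_of_notMem hjT, hTcard]
    · have herase : (insert j T).erase j = T := Finset.erase_insert hjT
      have hkey := gramdet_erase w (T := insert j T) (i := j) (Finset.mem_insert_self j T)
      rw [herase] at hkey
      rw [hkey]
      apply mul_pos _ hTpos
      have hne : w j - (Submodule.orthogonalProjectionOnto (span ℝ (w '' (↑T : Set (Fin n)))) (w j) : Euc n) ≠ 0 := by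
        intro h0
        apply hz
        rw [sub_eq_zero] at h0
        rw [h0]
        exact SetLike.coe_mem _
      have := norm_pos_iff.2 hne
      positivity

lemma norm_lt_inv_sqrt_two {y : ℝ} (hy : 0 ≤ y) (h : y^2 < 1/2) : y < 1/Real.sqrt 2 := by
  have h2 : (1:ℝ)/Real.sqrt 2 = Real.sqrt (1/2) := by
    rw [one_div, one_div, Real.sqrt_inv]
  rw [h2]
  exact (Real.lt_sqrt hy).2 h

end BTHelpers

set_option maxHeartbeats 2000000 in
/-- **First step of the Bourgain–Tzafriri argument.** There is a constant `d₁ > 0`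
(one may take `d₁ = 1/320`) such that for every matrix `A` with unit-length columns and
every `σ₁` with `|σ₁| ≤ d₁n‖A‖⁻²`, there is `σ₂` disjoint from `σ₁` with
`|σ₂| ≥ d₁n‖A‖⁻²` such that for every `i ∈ σ₂` the orthogonal projection of `Aeᵢ` onto
`span{Aeⱼ : j ∈ (σ₁ ∪ σ₂) \ {i}}` has norm less than `1/√2`. -/
theorem bourgain_tzafriri_step_one :
    ∃ d₁ : ℝ, 0 < d₁ ∧
      ∀ (n : ℕ) (A : Matrix (Fin n) (Fin n) ℝ),
        (∀ i : Fin n, ‖Matrix.toEuclideanLin A (EuclideanSpace.single i (1:ℝ))‖ = 1) →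
        ∀ σ₁ : Finset (Fin n), (σ₁.card : ℝ) ≤ d₁ * n / opNorm A ^ 2 →
          ∃ σ₂ : Finset (Fin n), Disjoint σ₁ σ₂ ∧
            d₁ * n / opNorm A ^ 2 ≤ (σ₂.card : ℝ) ∧
            ∀ i ∈ σ₂,
              ‖(Submodule.orthogonalProjectionOnto
                  (Submodule.span ℝ
                    ((fun j => Matrix.toEuclideanLin A (EuclideanSpace.single j (1:ℝ))) ''
                      (((σ₁ ∪ σ₂).erase i : Finset (Fin n)) : Set (Fin n))))
                  (Matrix.toEuclideanLin A (EuclideanSpace.single i (1:ℝ))) :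
                EuclideanSpace ℝ (Fin n))‖ < 1 / Real.sqrt 2 := by
  classical
  refine ⟨1/320, by norm_num, ?_⟩
  intro n A hcol σ₁ hσ₁
  rcases Nat.eq_zero_or_pos n with hn | hn
  · subst hn
    exact ⟨∅, Finset.disjoint_empty_right _, by simp, fun i hi => absurd hi (Finset.notMem_empty i)⟩
  set v : Fin n → Euc n := fun j => Matrix.toEuclideanLin A (EuclideanSpace.single j (1:ℝ)) with hv
  have hnR : (0:ℝ) < n := by exact_mod_cast hn
  set K := opNorm A with hK
  have hK1 : 1 ≤ K := one_le_opNorm A ⟨0, hn⟩ (hcol ⟨0, hn⟩)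
  have hK0 : 0 < K := lt_of_lt_of_le one_pos hK1
  have hK2 : (0:ℝ) < K^2 := by positivity
  have hK21 : (1:ℝ) ≤ K^2 := by nlinarith
  set t : ℝ := 1/320 * n / K^2 with ht
  have ht0 : 0 < t := by rw [ht]; positivity
  have htK : t * K^2 = 1/320 * n := by rw [ht]; field_simp
  have htn : t ≤ 1/320 * n := by
    rw [ht]
    calc 1/320 * (n:ℝ) / K^2 ≤ 1/320 * n / 1 := by
          apply div_le_div_of_nonneg_left (by positivity) one_pos hK21
      _ = 1/320 * n := by ring
  set V₁ := Submodule.span ℝ (v '' (↑σ₁ : Set (Fin n))) with hV₁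
  set L0 : Euc n →ₗ[ℝ] Euc n := Matrix.toEuclideanLin A with hL0
  have hL0b : ∀ x, ‖L0 x‖ ≤ K * ‖x‖ := le_opNorm_mul A
  have hrank1 : (Module.finrank ℝ V₁ : ℝ) ≤ σ₁.card := by
    have : Module.finrank ℝ V₁ ≤ σ₁.card := by
      rw [hV₁, ← Finset.coe_image]
      exact le_trans (finrank_span_finset_le_card (σ₁.image v)) Finset.card_image_le
    exact_mod_cast this
  have hvL0 : ∀ i, v i = L0 (EuclideanSpace.single i (1:ℝ)) := fun i => rfl
  have hsum1 : ∑ i, ‖(Submodule.orthogonalProjectionOnto V₁ (v i) : Euc n)‖^2 ≤ 1/320 * n := by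
    calc ∑ i, ‖(Submodule.orthogonalProjectionOnto V₁ (v i) : Euc n)‖^2
        = ∑ i, ‖(Submodule.orthogonalProjectionOnto V₁ (L0 (EuclideanSpace.single i (1:ℝ))) : Euc n)‖^2 := rfl
      _ ≤ (Module.finrank ℝ V₁ : ℝ) * K^2 := sum_norm_sq_proj L0 K hK0.le hL0b V₁
      _ ≤ (σ₁.card : ℝ) * K^2 := mul_le_mul_of_nonneg_right hrank1 hK2.le
      _ ≤ t * K^2 := mul_le_mul_of_nonneg_right (by rw [ht]; exact hσ₁) hK2.le
      _ = 1/320 * n := htK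
  set B := Finset.univ.filter
    (fun i : Fin n => 1/4 < ‖(Submodule.orthogonalProjectionOnto V₁ (v i) : Euc n)‖^2) with hB
  have hcardB : (B.card : ℝ) ≤ 1/80 * n := by
    have h1 : (B.card:ℝ) * (1/4) ≤ 1/320 * n := by
      calc (B.card:ℝ) * (1/4) = ∑ _i ∈ B, (1/4 : ℝ) := by
            rw [Finset.sum_const, nsmul_eq_mul]
        _ ≤ ∑ i ∈ B, ‖(Submodule.orthogonalProjectionOnto V₁ (v i) : Euc n)‖^2 :=
            Finset.sum_le_sum (fun i hi => le_of_lt (Finset.mem_filter.1 hi).2)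
        _ ≤ ∑ i, ‖(Submodule.orthogonalProjectionOnto V₁ (v i) : Euc n)‖^2 :=
            Finset.sum_le_sum_of_subset_of_nonneg (Finset.subset_univ _)
              (fun i _ _ => by positivity)
        _ ≤ 1/320 * n := hsum1
    linarith
  set S := (Finset.univ \ σ₁) \ B with hS
  have hSσ₁ : ∀ j ∈ S, j ∉ σ₁ := by
    intro j hj
    have := (Finset.mem_sdiff.1 ((Finset.mem_sdiff.1 hj).1)).2
    exact this
  have hSB : ∀ j ∈ S, ‖(Submodule.orthogonalProjectionOnto V₁ (v j) : Euc n)‖^2 ≤ 1/4 := by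
    intro j hj
    have hnB := (Finset.mem_sdiff.1 hj).2
    by_contra hcon
    exact hnB (Finset.mem_filter.2 ⟨Finset.mem_univ j, lt_of_not_ge hcon⟩)
  have hcardS : (n:ℝ) - t - 1/80 * n ≤ (S.card : ℝ) := by
    have c1 : (Finset.univ \ σ₁).card ≤ S.card + B.card := by
      rw [hS]; exact Finset.card_le_card_sdiff_add_card
    have c2 : (Finset.univ : Finset (Fin n)).card ≤ (Finset.univ \ σ₁).card + σ₁.card :=
      Finset.card_le_card_sdiff_add_card
    have c3 : ((Finset.univ : Finset (Fin n)).card : ℝ) = n := by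
      rw [Finset.card_univ, Fintype.card_fin]
    have c1' : ((Finset.univ \ σ₁).card : ℝ) ≤ (S.card : ℝ) + B.card := by exact_mod_cast c1
    have c2' : (n:ℝ) ≤ ((Finset.univ \ σ₁).card : ℝ) + σ₁.card := by
      rw [← c3]; exact_mod_cast c2
    have hσt : (σ₁.card : ℝ) ≤ t := by rw [ht]; exact hσ₁
    linarith
  have hS315 : 315/320 * (n:ℝ) ≤ (S.card : ℝ) := by linarith
  set b : Fin n → Euc n := fun j => v j - Submodule.orthogonalProjectionOnto V₁ (v j) with hb
  set L1 : Euc n →ₗ[ℝ] Euc n :=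
    (LinearMap.id - V₁.subtype ∘ₗ (Submodule.orthogonalProjectionOnto V₁).toLinearMap) ∘ₗ L0 with hL1
  have hL1e : ∀ j, L1 (EuclideanSpace.single j (1:ℝ)) = b j := fun j => rfl
  have hL1b : ∀ x, ‖L1 x‖ ≤ K * ‖x‖ := by
    intro x
    have h1 : L1 x = L0 x - Submodule.orthogonalProjectionOnto V₁ (L0 x) := rfl
    rw [h1]
    exact le_trans (sub_proj_norm_le V₁ (L0 x)) (hL0b x)
  have hvnorm : ∀ j, ‖v j‖ = 1 := fun j => hcol j
  have hbnorm : ∀ j ∈ S, 3/4 ≤ ‖b j‖^2 := by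
    intro j hj
    have hpy := proj_pyth V₁ (v j)
    have h14 := hSB j hj
    have hb1 : ‖v j - (Submodule.orthogonalProjectionOnto V₁ (v j) : Euc n)‖ = ‖b j‖ := rfl
    rw [hb1, hvnorm j] at hpy
    nlinarith
  set m := Nat.ceil t with hm
  have hm1 : 1 ≤ m := Nat.one_le_ceil_iff.2 ht0
  have htm : t ≤ m := Nat.le_ceil t
  rcases eq_or_lt_of_le hm1 with hm1' | hm2
  · -- m = 1 case
    have hSne : S.Nonempty := by
      rw [← Finset.card_pos]
      by_contra hcon
      push_neg at hcon
      have h0 : S.card = 0 := Nat.le_zero.1 hcon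
      have h0' : (S.card : ℝ) = 0 := by rw [h0]; simp
      linarith
    obtain ⟨i, hiS⟩ := hSne
    refine ⟨{i}, Finset.disjoint_singleton_right.2 (hSσ₁ i hiS), ?_, ?_⟩
    · rw [Finset.card_singleton]
      have hmr : (m:ℝ) = 1 := by rw [← hm1']; norm_num
      push_cast
      linarith
    · intro i' hi'
      have hi'i : i' = i := Finset.mem_singleton.1 hi'
      subst hi'i
      have hset : (σ₁ ∪ {i'}).erase i' = σ₁ := by
        ext j
        simp only [Finset.mem_erase, Finset.mem_union, Finset.mem_singleton]
        constructor
        · rintro ⟨hne, h | h⟩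
          · exact h
          · exact absurd h hne
        · intro hj
          exact ⟨fun he => (hSσ₁ i' hiS) (he ▸ hj), Or.inl hj⟩
      rw [hset, ← hV₁, ← hvL0 i']
      apply norm_lt_inv_sqrt_two (norm_nonneg _)
      have h14 := hSB i' hiS
      linarith
  · -- m ≥ 2 case
    have ht1 : (1:ℝ) < t := by exact_mod_cast Nat.lt_ceil.1 hm2
    have hmlt : (m:ℝ) < t + 1 := by exact_mod_cast Nat.ceil_lt_add_one ht0.le
    have hm2t : (m:ℝ) ≤ 2*t := by linarith
    set Vb := Submodule.span ℝ (b '' (↑S : Set (Fin n))) with hVb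
    have hsum2 := sum_norm_sq_proj L1 K hK0.le hL1b Vb
    have hlow : 3/4 * (S.card:ℝ)
        ≤ ∑ i, ‖(Submodule.orthogonalProjectionOnto Vb (L1 (EuclideanSpace.single i (1:ℝ))) : Euc n)‖^2 := by
      calc 3/4 * (S.card:ℝ) = ∑ _j ∈ S, (3/4:ℝ) := by
            rw [Finset.sum_const, nsmul_eq_mul]; ring
        _ ≤ ∑ j ∈ S, ‖(Submodule.orthogonalProjectionOnto Vb (L1 (EuclideanSpace.single j (1:ℝ))) : Euc n)‖^2 := by
            apply Finset.sum_le_sum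
            intro j hj
            have hbj : b j ∈ Vb := Submodule.subset_span (Set.mem_image_of_mem b (by exact_mod_cast hj))
            have hP : (Submodule.orthogonalProjectionOnto Vb (b j) : Euc n) = b j :=
              Submodule.starProjection_eq_self_iff.2 hbj
            rw [hL1e j, hP]
            exact hbnorm j hj
        _ ≤ ∑ i, ‖(Submodule.orthogonalProjectionOnto Vb (L1 (EuclideanSpace.single i (1:ℝ))) : Euc n)‖^2 :=
            Finset.sum_le_sum_of_subset_of_nonneg (Finset.subset_univ _) (fun i _ _ => by positivity)
    have hrankVb : m ≤ Module.finrank ℝ Vb := by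
      by_contra hcon
      push_neg at hcon
      have h1 : (Module.finrank ℝ Vb : ℝ) ≤ (m:ℝ) - 1 := by
        have h0 : Module.finrank ℝ Vb + 1 ≤ m := hcon
        have h0' := (Nat.cast_le (α := ℝ)).2 h0
        push_cast at h0'
        linarith
      have h2 : 3/4 * (S.card:ℝ) ≤ ((m:ℝ)-1) * K^2 :=
        le_trans hlow (le_trans hsum2 (mul_le_mul_of_nonneg_right h1 hK2.le))
      have h3 : ((m:ℝ)-1) * K^2 ≤ 2*(t*K^2) := by nlinarith
      rw [htK] at h3
      nlinarith [hS315, hnR]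
    obtain ⟨T₀, hT₀S, hT₀card, hT₀pos⟩ := exists_gramdet_pos b S m hrankVb
    have hT₀mem : T₀ ∈ S.powersetCard m := Finset.mem_powersetCard.2 ⟨hT₀S, hT₀card⟩
    obtain ⟨T, hTmem, hTmax⟩ := Finset.exists_max_image (S.powersetCard m) (gramdet b) ⟨T₀, hT₀mem⟩
    obtain ⟨hTS, hTcard⟩ := Finset.mem_powersetCard.1 hTmem
    have hTpos : 0 < gramdet b T := lt_of_lt_of_le hT₀pos (hTmax T₀ hT₀mem)
    have hkey : ∀ i ∈ T, 1/2 <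
        ‖b i - (Submodule.orthogonalProjectionOnto (Submodule.span ℝ (b '' (↑(T.erase i) : Set (Fin n)))) (b i) : Euc n)‖^2 := by
      intro i hiT
      by_contra hcon
      push_neg at hcon
      have hgid := gramdet_erase b hiT
      have hgE0 : 0 ≤ gramdet b (T.erase i) := gramdet_nonneg b _
      have hgEpos : 0 < gramdet b (T.erase i) := by
        rcases hgE0.lt_or_eq with h | h
        · exact h
        · exfalso
          rw [← h, mul_zero] at hgid
          exact hTpos.ne' hgid
      have hswap : ∀ j ∈ S \ T,
          ‖b j - (Submodule.orthogonalProjectionOnto (Submodule.span ℝ (b '' (↑(T.erase i) : Set (Fin n)))) (b j) : Euc n)‖^2 ≤ 1/2 := by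
        intro j hj
        obtain ⟨hjS, hjT⟩ := Finset.mem_sdiff.1 hj
        have hjei : j ∉ T.erase i := fun h => hjT (Finset.mem_of_mem_erase h)
        have hT'S : insert j (T.erase i) ⊆ S :=
          Finset.insert_subset hjS ((Finset.erase_subset i T).trans hTS)
        have hT'card : (insert j (T.erase i)).card = m := by
          rw [Finset.card_insert_of_notMem hjei, Finset.card_erase_of_mem hiT, hTcard]
          omega
        have hle : gramdet b (insert j (T.erase i)) ≤ gramdet b T :=
          hTmax _ (Finset.mem_powersetCard.2 ⟨hT'S, hT'card⟩)
        have hgid' := gramdet_erase b (T := insert j (T.erase i)) (i := j) (Finset.mem_insert_self j _)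
        rw [Finset.erase_insert hjei] at hgid'
        rw [hgid, hgid'] at hle
        have hd2 := le_of_mul_le_mul_right hle hgEpos
        linarith
      have hproj : ∀ j ∈ S \ T, 1/4 ≤
          ‖(Submodule.orthogonalProjectionOnto (Submodule.span ℝ (b '' (↑(T.erase i) : Set (Fin n)))) (b j) : Euc n)‖^2 := by
        intro j hj
        have hpy := proj_pyth (Submodule.span ℝ (b '' (↑(T.erase i) : Set (Fin n)))) (b j)
        have h34 := hbnorm j (Finset.mem_sdiff.1 hj).1
        have := hswap j hj
        linarith
      have hsum3 := sum_norm_sq_proj L1 K hK0.le hL1b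
        (Submodule.span ℝ (b '' (↑(T.erase i) : Set (Fin n))))
      have hWrank : (Module.finrank ℝ (Submodule.span ℝ (b '' (↑(T.erase i) : Set (Fin n)))) : ℝ)
          ≤ (m:ℝ) - 1 := by
        have h1 : Module.finrank ℝ (Submodule.span ℝ (b '' (↑(T.erase i) : Set (Fin n))))
            ≤ (T.erase i).card := by
          rw [← Finset.coe_image]
          exact le_trans (finrank_span_finset_le_card ((T.erase i).image b)) Finset.card_image_le
        have h2 : (T.erase i).card = m - 1 := by rw [Finset.card_erase_of_mem hiT, hTcard]
        rw [h2] at h1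
        have h3 := (Nat.cast_le (α := ℝ)).2 h1
        have h4 : ((m - 1:ℕ):ℝ) = (m:ℝ) - 1 := by
          rw [Nat.cast_sub hm1]; norm_num
        rw [h4] at h3
        exact h3
      have h2ST : m ≤ S.card := hTcard ▸ Finset.card_le_card hTS
      have hsdcard : ((S \ T).card : ℝ) = (S.card:ℝ) - m := by
        rw [Finset.card_sdiff_of_subset hTS, hTcard, Nat.cast_sub h2ST]
      have hlow2 : 1/4 * ((S.card:ℝ) - (m:ℝ)) ≤ ((m:ℝ)-1) * K^2 := by
        calc 1/4 * ((S.card:ℝ) - (m:ℝ)) = ∑ _j ∈ S \ T, (1/4:ℝ) := by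
              rw [Finset.sum_const, nsmul_eq_mul, hsdcard]; ring
          _ ≤ ∑ j ∈ S \ T,
              ‖(Submodule.orthogonalProjectionOnto (Submodule.span ℝ (b '' (↑(T.erase i) : Set (Fin n)))) (b j) : Euc n)‖^2 :=
              Finset.sum_le_sum hproj
          _ = ∑ j ∈ S \ T,
              ‖(Submodule.orthogonalProjectionOnto (Submodule.span ℝ (b '' (↑(T.erase i) : Set (Fin n)))) (L1 (EuclideanSpace.single j (1:ℝ))) : Euc n)‖^2 := by
              apply Finset.sum_congr rfl
              intro j _
              rw [hL1e j]
          _ ≤ ∑ j, ‖(Submodule.orthogonalProjectionOnto (Submodule.span ℝ (b '' (↑(T.erase i) : Set (Fin n)))) (L1 (EuclideanSpace.single j (1:ℝ))) : Euc n)‖^2 :=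
              Finset.sum_le_sum_of_subset_of_nonneg (Finset.subset_univ _) (fun j _ _ => by positivity)
          _ ≤ (Module.finrank ℝ (Submodule.span ℝ (b '' (↑(T.erase i) : Set (Fin n)))) : ℝ) * K^2 := hsum3
          _ ≤ ((m:ℝ)-1) * K^2 := mul_le_mul_of_nonneg_right hWrank hK2.le
      have hmt1 : (m:ℝ) - 1 ≤ t := by linarith
      have hfin : ((m:ℝ)-1) * K^2 ≤ 1/320 * n := by
        calc ((m:ℝ)-1)*K^2 ≤ t*K^2 := mul_le_mul_of_nonneg_right hmt1 hK2.le
          _ = 1/320 * n := htK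
      nlinarith [hS315, hm2t, htn, hnR, hlow2, hfin]
    refine ⟨T, Finset.disjoint_right.2 (fun a haT => hSσ₁ a (hTS haT)), ?_, ?_⟩
    · calc t ≤ (m:ℝ) := htm
        _ = (T.card:ℝ) := by rw [hTcard]
    · intro i hiT
      set Wi := Submodule.span ℝ (b '' (↑(T.erase i) : Set (Fin n))) with hWi
      have hd2 := hkey i hiT
      set U' := V₁ ⊔ Wi with hU'
      have hWperp : Wi ≤ V₁ᗮ := by
        rw [hWi]
        apply Submodule.span_le.2
        rintro z ⟨j, hj, rfl⟩
        exact Submodule.sub_starProjection_mem_orthogonal (K := V₁) (v j)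
      have hsub : Submodule.span ℝ (v '' (↑((σ₁ ∪ T).erase i) : Set (Fin n))) ≤ U' := by
        apply Submodule.span_le.2
        rintro z ⟨j, hj, rfl⟩
        have hj' := Finset.mem_erase.1 (by exact_mod_cast hj : j ∈ (σ₁ ∪ T).erase i)
        rcases Finset.mem_union.1 hj'.2 with hjσ | hjT2
        · exact Submodule.mem_sup_left (Submodule.subset_span (Set.mem_image_of_mem v hjσ))
        · have hbj : b j ∈ Wi :=
            Submodule.subset_span (Set.mem_image_of_mem b
              (by exact_mod_cast Finset.mem_erase.2 ⟨hj'.1, hjT2⟩))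
          have hvz : (Submodule.orthogonalProjectionOnto V₁ (v j) : Euc n) + b j = v j := by
            have hbj2 : b j = v j - (Submodule.orthogonalProjectionOnto V₁ (v j) : Euc n) := rfl
            rw [hbj2]
            abel
          rw [← hvz]
          exact Submodule.add_mem_sup (SetLike.coe_mem _) hbj
      have hmono := proj_mono hsub (v i)
      set q : Euc n := (Submodule.orthogonalProjectionOnto V₁ (v i) : Euc n)
        + (Submodule.orthogonalProjectionOnto Wi (b i) : Euc n) with hq
      have hqU : q ∈ U' := Submodule.add_mem_sup (SetLike.coe_mem _) (SetLike.coe_mem _)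
      have hr : v i - q = b i - (Submodule.orthogonalProjectionOnto Wi (b i) : Euc n) := by
        rw [hq]
        have hbi : b i = v i - (Submodule.orthogonalProjectionOnto V₁ (v i) : Euc n) := rfl
        rw [hbi]
        abel
      have hrV₁ : v i - q ∈ V₁ᗮ := by
        rw [hr]
        have hbiV : b i ∈ V₁ᗮ := Submodule.sub_starProjection_mem_orthogonal (K := V₁) (v i)
        exact sub_mem hbiV (hWperp (SetLike.coe_mem _))
      have hrW : v i - q ∈ Wiᗮ := by
        rw [hr]
        exact Submodule.sub_starProjection_mem_orthogonal (K := Wi) (b i)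
      have horthq : ∀ u ∈ U', (inner ℝ (v i - q) u : ℝ) = 0 := by
        intro u hu
        rcases Submodule.mem_sup.1 hu with ⟨a, ha, c, hc, rfl⟩
        rw [inner_add_right]
        have h1 : (inner ℝ (v i - q) a : ℝ) = 0 := by
          rw [real_inner_comm]
          exact hrV₁ a ha
        have h2 : (inner ℝ (v i - q) c : ℝ) = 0 := by
          rw [real_inner_comm]
          exact hrW c hc
        rw [h1, h2, add_zero]
      have hPU : (Submodule.orthogonalProjectionOnto U' (v i) : Euc n) = q := by
        have h := Submodule.eq_starProjection_of_mem_of_inner_eq_zero (K := U') hqU horthq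
        exact h
      have hpyU := proj_pyth U' (v i)
      rw [hPU, hvnorm i, one_pow] at hpyU
      have hq2 : ‖q‖^2 < 1/2 := by
        have h1 : 1/2 < ‖v i - q‖^2 := by rw [hr]; exact hd2
        linarith
      rw [← hvL0 i]
      apply norm_lt_inv_sqrt_two (norm_nonneg _)
      have hfinal : ‖(Submodule.orthogonalProjectionOnto (Submodule.span ℝ (v '' (↑((σ₁ ∪ T).erase i) : Set (Fin n)))) (v i) : Euc n)‖ ≤ ‖q‖ := by
        rw [← hPU]
        exact hmono
      nlinarith [norm_nonneg ((Submodule.orthogonalProjectionOnto (Submodule.span ℝ (v '' (↑((σ₁ ∪ T).erase i) : Set (Fin n)))) (v i) : Euc n)), norm_nonneg q]
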